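/- Let G be a weighted graph with h ≥ 2 connected components and let W be a real number with W > w(E(G)). Let G' be the weighted graph obtained from G by adding one new vertex u and, for each connected component of G, one new edge of weight W joining u to an arbitrarily chosen vertex of that component. Then: (i) G' is connected; (ii) every k-way split of G is also a k-way split of G' of the same weight; and (iii) for every integer k with 2 ≤ k ≤ |V(G)| − h + 1, every minimum k-way split of G' contains none of the newly added edges and is a minimum k-way split of G. -/

import Mathlib

open Finset

namespace KCut

open scoped Classical

/-- Number of connected components of a graph. -/
noncomputable def numComp {V : Type*} (G : SimpleGraph V) : ℕ :=
  Nat.card G.ConnectedComponent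

/-- `S` is an `h`-way split of `G`: a set of edges of `G` whose removal increases the
number of connected components by `h - 1`. -/
def IsSplit {V : Type*} (G : SimpleGraph V) (S : Finset (Sym2 V)) (h : ℕ) : Prop :=
  ↑S ⊆ G.edgeSet ∧ numComp (G.deleteEdges ↑S) = (h - 1) + numComp G

/-- Total weight of a finite set of edges. -/
noncomputable def weight {V : Type*} (w : Sym2 V → ℝ) (S : Finset (Sym2 V)) : ℝ :=
  ∑ e ∈ S, w e

/-- Density of an `h`-way split: its weight divided by `h - 1`. -/
noncomputable def density {V : Type*} (w : Sym2 V → ℝ) (S : Finset (Sym2 V)) (h : ℕ) : ℝ :=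
  weight w S / ((h : ℝ) - 1)

/-- `β(G) = |E|/|V|`. -/
noncomputable def beta {V : Type*} [Fintype V] (G : SimpleGraph V) [Fintype G.edgeSet] : ℝ :=
  (G.edgeFinset.card : ℝ) / (Fintype.card V : ℝ)

/-- A matching: a set of pairwise vertex-disjoint edges of `G`. -/
def IsMatchingSet {V : Type*} (G : SimpleGraph V) (M : Finset (Sym2 V)) : Prop :=
  ↑M ⊆ G.edgeSet ∧ ∀ e ∈ M, ∀ f ∈ M, e ≠ f → ∀ v : V, v ∈ e → v ∉ f

/-- A minimum `h`-way split: an `h`-way split of minimum total weight. -/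
def IsMinSplit {V : Type*} (G : SimpleGraph V) (w : Sym2 V → ℝ)
    (S : Finset (Sym2 V)) (h : ℕ) : Prop :=
  IsSplit G S h ∧ ∀ T : Finset (Sym2 V), IsSplit G T h → weight w S ≤ weight w T

/-- An `h`-way split `S` is sparse if no split of separation degree at most `h`
has smaller density. -/
def IsSparse {V : Type*} (G : SimpleGraph V) (w : Sym2 V → ℝ)
    (S : Finset (Sym2 V)) (h : ℕ) : Prop :=
  ∀ h' : ℕ, h' ≤ h → 2 ≤ h' → ∀ S' : Finset (Sym2 V), IsSplit G S' h' →
    density w S h ≤ density w S' h'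

section Aux

variable {V : Type*}


instance (G : SimpleGraph V) [Finite V] : Finite G.ConnectedComponent :=
  Finite.of_surjective G.connectedComponentMk Quot.mk_surjective

lemma reach_del_aux (K : SimpleGraph V) (a b : V) {u v : V} (h : K.Reachable u v) :
    (K.deleteEdges {s(a,b)}).Reachable u v ∨
      (((K.deleteEdges {s(a,b)}).Reachable u a ∨ (K.deleteEdges {s(a,b)}).Reachable u b) ∧
       ((K.deleteEdges {s(a,b)}).Reachable v a ∨ (K.deleteEdges {s(a,b)}).Reachable v b)) := by
  set Kd := K.deleteEdges {s(a,b)} with hKd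
  obtain ⟨p⟩ := h
  induction p with
  | nil => exact Or.inl (SimpleGraph.Reachable.refl _)
  | @cons u x v h p ih =>
    by_cases he : s(u, x) = s(a, b)
    · have hux : u = a ∧ x = b ∨ u = b ∧ x = a := Sym2.eq_iff.mp he
      have hu' : Kd.Reachable u a ∨ Kd.Reachable u b := by
        rcases hux with ⟨h1, _⟩ | ⟨h1, _⟩
        · exact Or.inl (h1 ▸ SimpleGraph.Reachable.refl _)
        · exact Or.inr (h1 ▸ SimpleGraph.Reachable.refl _)
      have hx' : Kd.Reachable x a ∨ Kd.Reachable x b := by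
        rcases hux with ⟨_, h2⟩ | ⟨_, h2⟩
        · exact Or.inr (h2 ▸ SimpleGraph.Reachable.refl _)
        · exact Or.inl (h2 ▸ SimpleGraph.Reachable.refl _)
      rcases ih with hih | ⟨_, hv⟩
      · refine Or.inr ⟨hu', ?_⟩
        rcases hx' with h' | h'
        · exact Or.inl (hih.symm.trans h')
        · exact Or.inr (hih.symm.trans h')
      · exact Or.inr ⟨hu', hv⟩
    · have hadj : Kd.Adj u x := by
        rw [hKd, SimpleGraph.deleteEdges_adj]
        exact ⟨h, by simpa using he⟩
      rcases ih with hih | ⟨hx', hv⟩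
      · exact Or.inl (hadj.reachable.trans hih)
      · refine Or.inr ⟨?_, hv⟩
        rcases hx' with h' | h'
        · exact Or.inl (hadj.reachable.trans h')
        · exact Or.inr (hadj.reachable.trans h')

lemma numComp_deleteEdges_le [Finite V] (K : SimpleGraph V) (e : Sym2 V) :
    numComp (K.deleteEdges {e}) ≤ numComp K + 1 := by
  induction e using Sym2.ind with
  | _ a b =>
  classical
  set Kd := K.deleteEdges {s(a,b)} with hKd
  have hle : Kd ≤ K := SimpleGraph.deleteEdges_le _
  let φ : Kd →g K := SimpleGraph.Hom.ofLE hle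
  have key : ∀ c c' : Kd.ConnectedComponent, c.map φ = c'.map φ →
      c = c' ∨ ((c = Kd.connectedComponentMk a ∨ c = Kd.connectedComponentMk b) ∧
        (c' = Kd.connectedComponentMk a ∨ c' = Kd.connectedComponentMk b)) := by
    refine SimpleGraph.ConnectedComponent.ind₂ ?_
    intro u v h
    have hreach : K.Reachable u v := by
      apply SimpleGraph.ConnectedComponent.exact
      simpa [SimpleGraph.ConnectedComponent.map_mk, φ] using h
    rcases reach_del_aux K a b hreach with h' | ⟨hu, hv⟩
    · exact Or.inl (SimpleGraph.ConnectedComponent.sound h')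
    · refine Or.inr ⟨?_, ?_⟩
      · rcases hu with h' | h'
        · exact Or.inl (SimpleGraph.ConnectedComponent.sound h')
        · exact Or.inr (SimpleGraph.ConnectedComponent.sound h')
      · rcases hv with h' | h'
        · exact Or.inl (SimpleGraph.ConnectedComponent.sound h')
        · exact Or.inr (SimpleGraph.ConnectedComponent.sound h')
  let θ : Kd.ConnectedComponent → K.ConnectedComponent ⊕ Unit := fun c =>
    if c = Kd.connectedComponentMk b then Sum.inr () else Sum.inl (c.map φ)
  have hinj : Function.Injective θ := by
    intro c c' hcc
    by_cases h1 : c = Kd.connectedComponentMk b <;>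
      by_cases h2 : c' = Kd.connectedComponentMk b
    · rw [h1, h2]
    · simp only [θ, if_pos h1, if_neg h2] at hcc; exact absurd hcc (by simp)
    · simp only [θ, if_neg h1, if_pos h2] at hcc; exact absurd hcc (by simp)
    · simp only [θ, if_neg h1, if_neg h2, Sum.inl.injEq] at hcc
      rcases key c c' hcc with h | ⟨ha, hb⟩
      · exact h
      · have hca : c = Kd.connectedComponentMk a := ha.resolve_right h1
        have hcb : c' = Kd.connectedComponentMk a := hb.resolve_right h2
        rw [hca, hcb]
  calc numComp Kd ≤ Nat.card (K.ConnectedComponent ⊕ Unit) :=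
        Nat.card_le_card_of_injective θ hinj
    _ = numComp K + 1 := by simp [Nat.card_sum, numComp]

lemma numComp_bot [Fintype V] : numComp (⊥ : SimpleGraph V) = Fintype.card V := by
  have hbij : Function.Bijective (⊥ : SimpleGraph V).connectedComponentMk := by
    constructor
    · intro u v h
      exact SimpleGraph.reachable_bot.mp (SimpleGraph.ConnectedComponent.exact h)
    · exact Quot.mk_surjective
  rw [numComp, ← Nat.card_eq_fintype_card]
  exact (Nat.card_eq_of_bijective _ hbij).symm

lemma deleteEdges_edgeSet_eq_bot (G : SimpleGraph V) : G.deleteEdges G.edgeSet = ⊥ := by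
  ext a b
  simp [SimpleGraph.deleteEdges_adj]

lemma exists_deletion [Fintype V] [DecidableEq V] (G : SimpleGraph V) [DecidableRel G.Adj]
    (n : ℕ) (h1 : numComp G ≤ n) (h2 : n ≤ Fintype.card V) :
    ∃ S : Finset (Sym2 V), ↑S ⊆ G.edgeSet ∧ numComp (G.deleteEdges ↑S) = n := by
  classical
  set l := G.edgeFinset.toList with hl
  set F : ℕ → ℕ := fun i => numComp (G.deleteEdges ↑((l.take i).toFinset)) with hF
  have hsub : ∀ i, ↑((l.take i).toFinset) ⊆ G.edgeSet := by
    intro i e he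
    simp only [List.coe_toFinset, Set.mem_setOf_eq] at he
    have : e ∈ l := List.mem_of_mem_take he
    rw [hl, Finset.mem_toList] at this
    exact SimpleGraph.mem_edgeFinset.mp this
  have hF0 : F 0 = numComp G := by
    simp [hF]
  have hFlen : F l.length = Fintype.card V := by
    have : (l.take l.length).toFinset = G.edgeFinset := by
      rw [List.take_length, hl, Finset.toList_toFinset]
    rw [hF]
    simp only [this]
    rw [SimpleGraph.coe_edgeFinset, deleteEdges_edgeSet_eq_bot, numComp_bot]
  have hstep : ∀ i, i < l.length → F (i + 1) ≤ F i + 1 := by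
    intro i hi
    have htake : l.take (i + 1) = l.take i ++ [l[i]] := by
      rw [← List.take_concat_get hi, List.concat_eq_append]
    have hfin : ((l.take (i+1)).toFinset : Set (Sym2 V)) =
        ↑((l.take i).toFinset) ∪ {l[i]} := by
      rw [htake, List.toFinset_append, Finset.coe_union]
      simp
    have : G.deleteEdges ↑((l.take (i+1)).toFinset) =
        (G.deleteEdges ↑((l.take i).toFinset)).deleteEdges {l[i]} := by
      rw [SimpleGraph.deleteEdges_deleteEdges, hfin]
    rw [hF]
    simp only [this]
    exact numComp_deleteEdges_le _ _
  have main : ∀ j, j ≤ l.length → n ≤ F j → ∃ i, i ≤ j ∧ F i = n := by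
    intro j
    induction j with
    | zero =>
      intro _ hn
      exact ⟨0, le_refl _, le_antisymm (by omega) hn⟩
    | succ j ih =>
      intro hj hn
      by_cases h : n ≤ F j
      · obtain ⟨i, hi, hFi⟩ := ih (by omega) h
        exact ⟨i, by omega, hFi⟩
      · have := hstep j (by omega)
        exact ⟨j + 1, le_refl _, by omega⟩
  obtain ⟨i, _, hFi⟩ := main l.length (le_refl _) (by rw [hFlen]; exact h2)
  exact ⟨(l.take i).toFinset, hsub i, hFi⟩


lemma key_count [Fintype V] [DecidableEq V] (G : SimpleGraph V)
    (r : G.ConnectedComponent → V) (hr : ∀ c, G.connectedComponentMk (r c) = c)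
    (G' : SimpleGraph (Option V))
    (hadj : ∀ a b : V, G'.Adj (some a) (some b) ↔ G.Adj a b)
    (hadju : ∀ a : V, G'.Adj none (some a) ↔ ∃ c, r c = a)
    (S : Finset (Sym2 V)) :
    numComp (G'.deleteEdges ↑(S.image (Sym2.map some))) + numComp G
      = numComp (G.deleteEdges ↑S) + 1 := by
  classical
  set H : SimpleGraph V := G.deleteEdges ↑S with hH
  set S' : Finset (Sym2 (Option V)) := S.image (Sym2.map some) with hS'
  set H' : SimpleGraph (Option V) := G'.deleteEdges ↑S' with hH'
  have hmapinj : Function.Injective (Sym2.map (some : V → Option V)) :=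
    Sym2.map.injective (Option.some_injective V)
  have hnone : ∀ e ∈ S', (none : Option V) ∉ e := by
    intro e he hn
    obtain ⟨f, _, rfl⟩ := Finset.mem_image.mp he
    rw [Sym2.mem_map] at hn
    obtain ⟨x, _, hx⟩ := hn
    exact Option.some_ne_none x hx
  have hAdjSS : ∀ a b : V, H'.Adj (some a) (some b) ↔ H.Adj a b := by
    intro a b
    rw [hH', hH, SimpleGraph.deleteEdges_adj, SimpleGraph.deleteEdges_adj, hadj]
    have : s(some a, some b) = Sym2.map some s(a, b) := by simp
    rw [this]
    constructor
    · rintro ⟨h1, h2⟩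
      refine ⟨h1, fun hc => h2 ?_⟩
      rw [Finset.mem_coe, hS']
      exact Finset.mem_image_of_mem _ hc
    · rintro ⟨h1, h2⟩
      refine ⟨h1, fun hc => h2 ?_⟩
      rw [Finset.mem_coe, hS', Finset.mem_image] at hc
      obtain ⟨f, hf, hfe⟩ := hc
      rwa [← hmapinj hfe]
  have hAdjN : ∀ a : V, H'.Adj none (some a) ↔ ∃ c, r c = a := by
    intro a
    rw [hH', SimpleGraph.deleteEdges_adj, hadju]
    constructor
    · exact fun h => h.1
    · intro h
      refine ⟨h, fun hc => ?_⟩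
      exact hnone _ hc (by simp)
  let φ : H →g H' := ⟨some, fun {a b} h => (hAdjSS a b).mpr h⟩
  set hasRoot : H.ConnectedComponent → Prop :=
    fun c => ∃ d, H.connectedComponentMk (r d) = c with hhasRoot
  let ρ : Option V → ({c : H.ConnectedComponent // ¬ hasRoot c} ⊕ Unit) := fun x =>
    match x with
    | none => Sum.inr ()
    | some a => if h : hasRoot (H.connectedComponentMk a) then Sum.inr ()
        else Sum.inl ⟨H.connectedComponentMk a, h⟩
  have hρadj : ∀ x y : Option V, H'.Adj x y → ρ x = ρ y := by
    intro x y hxy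
    match x, y with
    | some a, some b =>
      have hab : H.Adj a b := (hAdjSS a b).mp hxy
      have hcc : H.connectedComponentMk a = H.connectedComponentMk b :=
        SimpleGraph.ConnectedComponent.connectedComponentMk_eq_of_adj hab
      simp only [ρ, hcc]
    | some a, none =>
      obtain ⟨c, rfl⟩ := (hAdjN a).mp hxy.symm
      have hroot : hasRoot (H.connectedComponentMk (r c)) := ⟨c, rfl⟩
      simp only [ρ, dif_pos hroot]
    | none, some a =>
      obtain ⟨c, rfl⟩ := (hAdjN a).mp hxy
      have hroot : hasRoot (H.connectedComponentMk (r c)) := ⟨c, rfl⟩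
      simp only [ρ, dif_pos hroot]
    | none, none => rfl
  have hρwalk : ∀ (x y : Option V) (p : H'.Walk x y), ρ x = ρ y := by
    intro x y p
    induction p with
    | nil => rfl
    | cons h p ih => exact (hρadj _ _ h).trans ih
  let f : H'.ConnectedComponent → ({c : H.ConnectedComponent // ¬ hasRoot c} ⊕ Unit) :=
    SimpleGraph.ConnectedComponent.lift ρ (fun x y p _ => hρwalk x y p)
  let g : ({c : H.ConnectedComponent // ¬ hasRoot c} ⊕ Unit) → H'.ConnectedComponent := fun x =>
    match x with
    | Sum.inr _ => H'.connectedComponentMk none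
    | Sum.inl c => c.val.map φ
  have hrootnone : ∀ a : V, hasRoot (H.connectedComponentMk a) →
      H'.Reachable (some a) none := by
    rintro a ⟨d, hd⟩
    have h1 : H.Reachable (r d) a := SimpleGraph.ConnectedComponent.exact hd
    have h2 : H'.Reachable (some (r d)) (some a) := h1.map φ
    have h3 : H'.Adj none (some (r d)) := (hAdjN (r d)).mpr ⟨d, rfl⟩
    exact h2.symm.trans h3.reachable.symm
  have hgf : ∀ c, g (f c) = c := by
    refine SimpleGraph.ConnectedComponent.ind ?_
    intro x
    match x with
    | none => rfl
    | some a =>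
      by_cases h : hasRoot (H.connectedComponentMk a)
      · have : f (H'.connectedComponentMk (some a)) = Sum.inr () := by
          simp only [f, SimpleGraph.ConnectedComponent.lift_mk, ρ, dif_pos h]
        rw [this]
        exact SimpleGraph.ConnectedComponent.sound (hrootnone a h).symm
      · have : f (H'.connectedComponentMk (some a)) =
            Sum.inl ⟨H.connectedComponentMk a, h⟩ := by
          simp only [f, SimpleGraph.ConnectedComponent.lift_mk, ρ, dif_neg h]
        rw [this]
        rfl
  have hfg : ∀ x, f (g x) = x := by
    rintro (⟨c, hc⟩ | ⟨⟩)
    · revert hc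
      refine SimpleGraph.ConnectedComponent.ind (fun a hc => ?_) c
      show f (H'.connectedComponentMk (some a)) = _
      simp only [f, SimpleGraph.ConnectedComponent.lift_mk, ρ, dif_neg hc]
    · rfl
  have hcardH' : numComp H' = Nat.card {c : H.ConnectedComponent // ¬ hasRoot c} + 1 := by
    rw [numComp, Nat.card_congr ⟨f, g, hgf, hfg⟩, Nat.card_sum]
    simp
  have hcardRoot : Nat.card {c : H.ConnectedComponent // hasRoot c} = numComp G := by
    rw [numComp]
    refine (Nat.card_eq_of_bijective
      (fun d => (⟨H.connectedComponentMk (r d), d, rfl⟩ :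
        {c : H.ConnectedComponent // hasRoot c})) ⟨?_, ?_⟩).symm
    · intro d d' hdd
      have h1 : H.connectedComponentMk (r d) = H.connectedComponentMk (r d') :=
        congrArg Subtype.val hdd
      have h2 : G.Reachable (r d) (r d') :=
        (SimpleGraph.ConnectedComponent.exact h1).mono (SimpleGraph.deleteEdges_le _)
      have h3 : G.connectedComponentMk (r d) = G.connectedComponentMk (r d') :=
        SimpleGraph.ConnectedComponent.sound h2
      rwa [hr, hr] at h3
    · rintro ⟨c, d, hd⟩
      exact ⟨d, Subtype.ext hd⟩
  have hcardH : numComp H = Nat.card {c : H.ConnectedComponent // hasRoot c} +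
      Nat.card {c : H.ConnectedComponent // ¬ hasRoot c} := by
    rw [numComp, ← Nat.card_congr (Equiv.sumCompl hasRoot), Nat.card_sum]
  omega


end Aux

theorem connectify_preserves_splits
    {V : Type*} [Fintype V] [DecidableEq V]
    (G : SimpleGraph V) [DecidableRel G.Adj]
    (w : Sym2 V → ℝ) (hw : ∀ e ∈ G.edgeSet, 0 < w e)
    (hcomp : 2 ≤ numComp G)
    (W : ℝ) (hW : weight w G.edgeFinset < W)
    (r : G.ConnectedComponent → V) (hr : ∀ c, G.connectedComponentMk (r c) = c)
    (G' : SimpleGraph (Option V))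
    (hadj : ∀ a b : V, G'.Adj (some a) (some b) ↔ G.Adj a b)
    (hadju : ∀ a : V, G'.Adj none (some a) ↔ ∃ c, r c = a)
    (w' : Sym2 (Option V) → ℝ)
    (hw'old : ∀ e : Sym2 V, e ∈ G.edgeSet → w' (e.map some) = w e)
    (hw'new : ∀ c : G.ConnectedComponent, w' s(none, some (r c)) = W) :
    G'.Connected ∧
    (∀ (k : ℕ) (S : Finset (Sym2 V)), IsSplit G S k →
      IsSplit G' (S.image (Sym2.map some)) k ∧
        weight w' (S.image (Sym2.map some)) = weight w S) ∧
    (∀ k : ℕ, 2 ≤ k → k ≤ Fintype.card V - numComp G + 1 →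
      ∀ S' : Finset (Sym2 (Option V)), IsMinSplit G' w' S' k →
        (∀ e ∈ S', (none : Option V) ∉ e) ∧
        ∃ T : Finset (Sym2 V), S' = T.image (Sym2.map some) ∧ IsMinSplit G w T k) := by
  classical
  have hmapinj : Function.Injective (Sym2.map (some : V → Option V)) :=
    Sym2.map.injective (Option.some_injective V)
  let ψ : G →g G' := ⟨some, fun {a b} h => (hadj a b).mpr h⟩
  have hxnone : ∀ x : Option V, G'.Reachable x none := by
    intro x
    match x with
    | none => exact SimpleGraph.Reachable.refl _
    | some a =>
      have h1 : G.Reachable (r (G.connectedComponentMk a)) a :=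
        SimpleGraph.ConnectedComponent.exact (hr _)
      have h2 : G'.Reachable (some (r (G.connectedComponentMk a))) (some a) := h1.map ψ
      have h3 : G'.Adj none (some (r (G.connectedComponentMk a))) := (hadju _).mpr ⟨_, rfl⟩
      exact h2.symm.trans h3.symm.reachable
  have hconn : G'.Connected :=
    SimpleGraph.Connected.mk (fun x y => (hxnone x).trans (hxnone y).symm)
  have hG'1 : numComp G' = 1 := by
    rw [numComp, Nat.card_eq_one_iff_unique]
    exact ⟨hconn.preconnected.subsingleton_connectedComponent, ⟨G'.connectedComponentMk none⟩⟩
  have himsub : ∀ S : Finset (Sym2 V), ↑S ⊆ G.edgeSet →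
      ↑(S.image (Sym2.map some)) ⊆ G'.edgeSet := by
    have hstep : ∀ f : Sym2 V, f ∈ G.edgeSet → Sym2.map some f ∈ G'.edgeSet := by
      intro f
      induction f using Sym2.ind with
      | _ a b =>
        intro hfE
        rw [SimpleGraph.mem_edgeSet] at hfE
        simpa using (hadj a b).mpr hfE
    intro S hS e he
    obtain ⟨f, hf, rfl⟩ := Finset.mem_image.mp (Finset.mem_coe.mp he)
    exact hstep f (hS hf)
  have hwt : ∀ S : Finset (Sym2 V), ↑S ⊆ G.edgeSet →
      weight w' (S.image (Sym2.map some)) = weight w S := by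
    intro S hS
    rw [weight, weight, Finset.sum_image (fun x _ y _ h => hmapinj h)]
    exact Finset.sum_congr rfl fun e he => hw'old e (hS he)
  have part2 : ∀ (k : ℕ) (S : Finset (Sym2 V)), IsSplit G S k →
      IsSplit G' (S.image (Sym2.map some)) k ∧
        weight w' (S.image (Sym2.map some)) = weight w S := by
    intro k S hS
    obtain ⟨hsub, hcard⟩ := hS
    have hk := key_count G r hr G' hadj hadju S
    refine ⟨⟨himsub S hsub, ?_⟩, hwt S hsub⟩
    rw [hG'1]
    omega
  refine ⟨hconn, part2, ?_⟩
  intro k hk2 hkle S' hmin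
  obtain ⟨⟨hS'sub, hS'card⟩, hS'min⟩ := hmin
  have hhV : numComp G ≤ Fintype.card V := by
    rw [numComp, ← Nat.card_eq_fintype_card]
    exact Nat.card_le_card_of_surjective G.connectedComponentMk Quot.mk_surjective
  obtain ⟨S₀, hS₀sub, hS₀card⟩ := exists_deletion G ((k - 1) + numComp G)
    (by omega) (by omega)
  have hS₀split : IsSplit G S₀ k := ⟨hS₀sub, hS₀card⟩
  obtain ⟨h1, h2⟩ := part2 k S₀ hS₀split
  have hWpos : 0 < W := by
    refine lt_of_le_of_lt ?_ hW
    exact Finset.sum_nonneg fun e he => (hw e (SimpleGraph.mem_edgeFinset.mp he)).le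
  have hS₀W : weight w S₀ < W := by
    refine lt_of_le_of_lt ?_ hW
    rw [weight, weight]
    refine Finset.sum_le_sum_of_subset_of_nonneg ?_ ?_
    · intro e he
      exact SimpleGraph.mem_edgeFinset.mpr (hS₀sub he)
    · intro e he _
      exact (hw e (SimpleGraph.mem_edgeFinset.mp he)).le
  have hminW : weight w' S' < W :=
    lt_of_le_of_lt (hS'min _ h1) (by rw [h2]; exact hS₀W)
  have hposE : ∀ f, f ∈ G'.edgeSet → 0 < w' f := by
    intro f
    induction f using Sym2.ind with
    | _ x y =>
      intro hfE
      rw [SimpleGraph.mem_edgeSet] at hfE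
      cases x with
      | none =>
        cases y with
        | none => exact (G'.loopless.irrefl none hfE).elim
        | some a =>
          obtain ⟨c, rfl⟩ := (hadju a).mp hfE
          rw [hw'new c]
          exact hWpos
      | some a =>
        cases y with
        | none =>
          obtain ⟨c, rfl⟩ := (hadju a).mp hfE.symm
          rw [Sym2.eq_swap, hw'new c]
          exact hWpos
        | some b =>
          have hab : G.Adj a b := (hadj a b).mp hfE
          have hmap : Sym2.map some s(a, b) = s(some a, some b) := by simp
          rw [← hmap, hw'old _ ((SimpleGraph.mem_edgeSet _).mpr hab)]
          exact hw _ ((SimpleGraph.mem_edgeSet _).mpr hab)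
  have heW : ∀ e, e ∈ G'.edgeSet → (none : Option V) ∈ e → w' e = W := by
    intro e
    induction e using Sym2.ind with
    | _ x y =>
      intro hfE hne
      rw [SimpleGraph.mem_edgeSet] at hfE
      rw [Sym2.mem_iff] at hne
      rcases hne with h | h
      · subst h
        cases y with
        | none => exact (G'.loopless.irrefl none hfE).elim
        | some a =>
          obtain ⟨c, rfl⟩ := (hadju a).mp hfE
          exact hw'new c
      · subst h
        cases x with
        | none => exact (G'.loopless.irrefl none hfE).elim
        | some a =>
          obtain ⟨c, rfl⟩ := (hadju a).mp hfE.symm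
          rw [Sym2.eq_swap]
          exact hw'new c
  have hnoneS' : ∀ e ∈ S', (none : Option V) ∉ e := by
    intro e he hne
    have hWle : W ≤ weight w' S' := by
      rw [weight]
      have h := Finset.single_le_sum (f := w')
        (fun f hf => (hposE f (hS'sub hf)).le) he
      rwa [heW e (hS'sub he) hne] at h
    linarith
  have hunmap : ∀ e : Sym2 (Option V), (none : Option V) ∉ e →
      ∃ f, Sym2.map some f = e := by
    intro e
    induction e using Sym2.ind with
    | _ x y =>
      intro hne
      cases x with
      | none => exact (hne (by rw [Sym2.mem_iff]; left; rfl)).elim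
      | some a =>
        cases y with
        | none => exact (hne (by rw [Sym2.mem_iff]; right; rfl)).elim
        | some b => exact ⟨s(a, b), by simp⟩
  have hex : ∃ T : Finset (Sym2 V), S' = T.image (Sym2.map some) := by
    refine ⟨S'.preimage (Sym2.map some) (hmapinj.injOn), ?_⟩
    ext e
    simp only [Finset.mem_image, Finset.mem_preimage]
    constructor
    · intro he
      obtain ⟨f, rfl⟩ := hunmap e (hnoneS' e he)
      exact ⟨f, he, rfl⟩
    · rintro ⟨f, hf, rfl⟩
      exact hf
  obtain ⟨T, hTeq⟩ := hex
  have hTsub : ↑T ⊆ G.edgeSet := by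
    have hstep : ∀ f : Sym2 V, Sym2.map some f ∈ G'.edgeSet → f ∈ G.edgeSet := by
      intro f
      induction f using Sym2.ind with
      | _ a b =>
        intro h
        have h' : s(some a, some b) ∈ G'.edgeSet := by simpa using h
        exact (SimpleGraph.mem_edgeSet _).mpr ((hadj a b).mp ((SimpleGraph.mem_edgeSet _).mp h'))
    intro f hf
    exact hstep f (hS'sub (hTeq ▸ Finset.mem_image_of_mem _ (Finset.mem_coe.mp hf)))
  have hkey := key_count G r hr G' hadj hadju T
  rw [← hTeq] at hkey
  have hTcard : numComp (G.deleteEdges ↑T) = (k - 1) + numComp G := by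
    rw [hS'card, hG'1] at hkey
    omega
  have hTsplit : IsSplit G T k := ⟨hTsub, hTcard⟩
  have hwT : weight w' S' = weight w T := by
    rw [hTeq]
    exact hwt T hTsub
  refine ⟨hnoneS', T, hTeq, hTsplit, ?_⟩
  intro T' hT'
  obtain ⟨h1', h2'⟩ := part2 k T' hT'
  calc weight w T = weight w' S' := hwT.symm
    _ ≤ weight w' (T'.image (Sym2.map some)) := hS'min _ h1'
    _ = weight w T' := h2'


end KCut
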